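/- Let α > 0 and let f : ℝ → ℝ admit an α-Lipschitz minorant m. Define f→(t) := m(0) + α t for t ≤ 0 and f→(t) := f(t) for t > 0, and let m→ be the α-Lipschitz minorant of f→. Then m→(t) = m(t) for all t ≥ 0. -/
import Mathlib


open Filter Set

/-- A function `g : ℝ → ℝ` is `α`-Lipschitz if `|g s - g t| ≤ α * |s - t|` for all `s, t`. -/
def IsAlphaLipschitz (α : ℝ) (g : ℝ → ℝ) : Prop :=
  ∀ s t : ℝ, |g s - g t| ≤ α * |s - t|

/-- `m` is the `α`-Lipschitz minorant of `f`: the greatest `α`-Lipschitz function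
dominated by `f`. -/
def IsLipMinorant (α : ℝ) (f m : ℝ → ℝ) : Prop :=
  IsAlphaLipschitz α m ∧ (∀ t, m t ≤ f t) ∧
    ∀ g : ℝ → ℝ, IsAlphaLipschitz α g → (∀ t, g t ≤ f t) → ∀ t, g t ≤ m t

lemma lip_min {α : ℝ} {g h : ℝ → ℝ} (hg : IsAlphaLipschitz α g) (hh : IsAlphaLipschitz α h) :
    IsAlphaLipschitz α (fun t => min (g t) (h t)) := by
  intro s t
  calc |min (g s) (h s) - min (g t) (h t)| ≤ max |g s - g t| |h s - h t| :=
        abs_min_sub_min_le_max _ _ _ _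
    _ ≤ α * |s - t| := max_le (hg s t) (hh s t)

lemma lip_lin {α : ℝ} (hα : 0 ≤ α) (c : ℝ) : IsAlphaLipschitz α (fun t => c + α * t) := by
  intro s t
  have h : c + α * s - (c + α * t) = α * (s - t) := by ring
  rw [h, abs_mul, abs_of_nonneg hα]

theorem minorant_right_splice (α : ℝ) (hα : 0 < α) (f m mright : ℝ → ℝ)
    (hm : IsLipMinorant α f m)
    (hmr : IsLipMinorant α (fun t => if t ≤ 0 then m 0 + α * t else f t) mright) :
    ∀ t, (0 : ℝ) ≤ t → mright t = m t := by
  obtain ⟨hmL, hmle, hmmax⟩ := hm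
  obtain ⟨hrL, hrle, hrmax⟩ := hmr
  have h1 : ∀ t, 0 ≤ t → m t ≤ mright t := by
    have hg : ∀ t, min (m t) (m 0 + α * t) ≤ (if t ≤ 0 then m 0 + α * t else f t) := by
      intro t
      by_cases ht : t ≤ 0
      · simpa [ht] using min_le_right (m t) (m 0 + α * t)
      · simpa [ht] using le_trans (min_le_left (m t) (m 0 + α * t)) (hmle t)
    have key := hrmax (fun t => min (m t) (m 0 + α * t))
      (lip_min hmL (lip_lin hα.le (m 0))) hg
    intro t ht
    have hmt : m t ≤ m 0 + α * t := by
      have h2 : m t - m 0 ≤ α * |t - 0| := le_trans (le_abs_self _) (hmL t 0)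
      rw [sub_zero, abs_of_nonneg ht] at h2
      linarith
    have := key t
    simpa [min_eq_left hmt] using this
  have h2 : ∀ t, 0 ≤ t → mright t ≤ m t := by
    have hr0 : mright 0 ≤ m 0 := by
      have := hrle 0
      simpa using this
    have hg : ∀ t, min (mright t) (mright 0 + α * t) ≤ f t := by
      intro t
      by_cases ht : t ≤ 0
      · have hcone : m 0 + α * t ≤ m t := by
          have h3 : m 0 - m t ≤ α * |0 - t| := le_trans (le_abs_self _) (hmL 0 t)
          rw [zero_sub, abs_neg, abs_of_nonpos ht] at h3
          linarith
        calc min (mright t) (mright 0 + α * t) ≤ mright 0 + α * t := min_le_right _ _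
          _ ≤ m 0 + α * t := by linarith
          _ ≤ m t := hcone
          _ ≤ f t := hmle t
      · have := hrle t
        simp only [ht, if_neg, if_false] at this
        exact le_trans (min_le_left _ _) this
    have key := hmmax (fun t => min (mright t) (mright 0 + α * t))
      (lip_min hrL (lip_lin hα.le (mright 0))) hg
    intro t ht
    have hrt : mright t ≤ mright 0 + α * t := by
      have h3 : mright t - mright 0 ≤ α * |t - 0| := le_trans (le_abs_self _) (hrL t 0)
      rw [sub_zero, abs_of_nonneg ht] at h3
      linarith
    have := key t
    simpa [min_eq_left hrt] using this
  intro t ht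
  exact le_antisymm (h2 t ht) (h1 t ht)
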